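/- Let Q ∈ S₋² be a negative semidefinite symmetric 2×2 matrix and λ > 0. Then the set {(F̄, v, ϑ) : v > 0, F̄·v ≤ (1, ϑ) Q (1, ϑ)^T} is convex. -/

import Mathlib

open Matrix

/-- Quadratic-over-linear key inequality. -/
lemma qol_key (h1 h2 c v1 v2 : ℝ) (hh1 : 0 ≤ h1) (hh2 : 0 ≤ h2)
    (hc : c ^ 2 ≤ h1 * h2) (hv1 : 0 < v1) (hv2 : 0 < v2) :
    2 * c * v1 * v2 ≤ h1 * v2 ^ 2 + h2 * v1 ^ 2 := by
  rcases le_or_gt c 0 with h | h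
  · nlinarith [mul_nonneg hh1 (sq_nonneg v2), mul_nonneg hh2 (sq_nonneg v1),
      mul_pos hv1 hv2]
  · have hX : 0 ≤ h1 * v2 ^ 2 + h2 * v1 ^ 2 :=
      add_nonneg (mul_nonneg hh1 (sq_nonneg v2)) (mul_nonneg hh2 (sq_nonneg v1))
    have hsq : (2 * c * v1 * v2) ^ 2 ≤ (h1 * v2 ^ 2 + h2 * v1 ^ 2) ^ 2 := by
      nlinarith [sq_nonneg (h1 * v2 ^ 2 - h2 * v1 ^ 2), mul_pos hv1 hv2,
        mul_pos (mul_pos hv1 hv2) (mul_pos hv1 hv2)]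
    nlinarith [mul_pos (mul_pos (mul_pos h hv1) hv2) (mul_pos hv1 hv2)]

set_option maxHeartbeats 1000000 in
/-- Relaxed EM cooling constraint: for Q negative semidefinite symmetric 2×2 and λ > 0, the set
{(F̄, v, ϑ) : v > 0, F̄·v ≤ (1, ϑ) Q (1, ϑ)ᵀ} is convex. -/
theorem stmt_5 (Q : Matrix (Fin 2) (Fin 2) ℝ) (hQ : (-Q).PosSemidef) (lam : ℝ) (hlam : 0 < lam) :
    Convex ℝ {p : ℝ × ℝ × ℝ | 0 < p.2.1 ∧
      p.1 * p.2.1 ≤ (![1, p.2.2]) ⬝ᵥ (Q *ᵥ ![1, p.2.2])} := by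
  set α : ℝ := -Q 0 0 with hα
  set β : ℝ := -Q 0 1 with hβ
  set γ : ℝ := -Q 1 1 with hγ
  have hsym : Q 0 1 = Q 1 0 := by
    simpa [conjTranspose, RCLike.star_def] using congrFun (congrFun hQ.1.symm 0) 1
  -- quadratic nonnegativity in both normalizations
  have hquad : ∀ t : ℝ, 0 ≤ α * t ^ 2 + 2 * β * t + γ := by
    intro t
    have h1 := hQ.dotProduct_mulVec_nonneg ![t, 1]
    simp [dotProduct, mulVec, Fin.sum_univ_two] at h1
    rw [← hsym] at h1
    simp only [hα, hβ, hγ]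
    nlinarith [h1]
  have hquad' : ∀ t : ℝ, 0 ≤ α + 2 * β * t + γ * t ^ 2 := by
    intro t
    have h1 := hQ.dotProduct_mulVec_nonneg ![1, t]
    simp [dotProduct, mulVec, Fin.sum_univ_two] at h1
    rw [← hsym] at h1
    simp only [hα, hβ, hγ]
    nlinarith [h1]
  have hdet : β ^ 2 ≤ α * γ := by
    have h := discrim_le_zero
      (fun t => by nlinarith [hquad t] : ∀ t : ℝ, 0 ≤ α * (t * t) + (2 * β) * t + γ)
    rw [discrim] at h
    nlinarith [h]
  -- rewrite the defining condition
  have hcond : ∀ p : ℝ × ℝ × ℝ,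
      (p ∈ {p : ℝ × ℝ × ℝ | 0 < p.2.1 ∧
        p.1 * p.2.1 ≤ (![1, p.2.2]) ⬝ᵥ (Q *ᵥ ![1, p.2.2])}) ↔
      (0 < p.2.1 ∧ p.1 * p.2.1 + (α + 2 * β * p.2.2 + γ * p.2.2 ^ 2) ≤ 0) := by
    intro p
    simp only [Set.mem_setOf_eq, dotProduct, mulVec, Fin.sum_univ_two,
      Matrix.cons_val_zero, Matrix.cons_val_one, Matrix.head_cons]
    rw [← hsym]
    constructor
    · rintro ⟨h, h'⟩; exact ⟨h, by simp only [hα, hβ, hγ]; nlinarith [h', hα, hβ, hγ]⟩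
    · rintro ⟨h, h'⟩
      refine ⟨h, ?_⟩
      simp only [hα, hβ, hγ] at h'
      nlinarith [h', hα, hβ, hγ]
  intro p hp q hq a b ha hb hab
  rw [hcond] at hp hq ⊢
  obtain ⟨hv1, hF1⟩ := hp
  obtain ⟨hv2, hF2⟩ := hq
  set F1 := p.1; set v1 := p.2.1; set θ1 := p.2.2
  set F2 := q.1; set v2 := q.2.1; set θ2 := q.2.2
  have hsmul1 : (a • p + b • q).2.1 = a * v1 + b * v2 := rfl
  have hsmul0 : (a • p + b • q).1 = a * F1 + b * F2 := rfl
  have hsmul2 : (a • p + b • q).2.2 = a * θ1 + b * θ2 := rfl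
  rw [hsmul1, hsmul0, hsmul2]
  obtain rfl : b = 1 - a := by linarith
  have hvpos : 0 < a * v1 + (1 - a) * v2 := by
    rcases eq_or_lt_of_le ha with h | h
    · simpa [← h] using hv2
    · nlinarith [mul_nonneg hb hv2.le]
  refine ⟨hvpos, ?_⟩
  set h1 : ℝ := α + 2 * β * θ1 + γ * θ1 ^ 2 with hh1def
  set h2 : ℝ := α + 2 * β * θ2 + γ * θ2 ^ 2 with hh2def
  set c : ℝ := α + β * θ1 + β * θ2 + γ * θ1 * θ2 with hcdef
  have hh1 : 0 ≤ h1 := hquad' θ1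
  have hh2 : 0 ≤ h2 := hquad' θ2
  have hc : c ^ 2 ≤ h1 * h2 := by
    have hid : h1 * h2 - c ^ 2 = (α * γ - β ^ 2) * (θ1 - θ2) ^ 2 := by
      simp only [hh1def, hh2def, hcdef]; ring
    nlinarith [mul_nonneg (sub_nonneg.2 hdet) (sq_nonneg (θ1 - θ2))]
  have K := qol_key h1 h2 c v1 v2 hh1 hh2 hc hv1 hv2
  have hv12 : 0 < v1 * v2 := mul_pos hv1 hv2
  have t1 : (a * a * (v1 * v2)) * (F1 * v1 + h1) ≤ 0 :=
    mul_nonpos_of_nonneg_of_nonpos (by positivity) hF1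
  have t2 : (a * (1 - a) * (v2 * v2)) * (F1 * v1 + h1) ≤ 0 :=
    mul_nonpos_of_nonneg_of_nonpos (by positivity) hF1
  have t3 : ((1 - a) * (1 - a) * (v1 * v2)) * (F2 * v2 + h2) ≤ 0 :=
    mul_nonpos_of_nonneg_of_nonpos (by positivity) hF2
  have t4 : (a * (1 - a) * (v1 * v1)) * (F2 * v2 + h2) ≤ 0 :=
    mul_nonpos_of_nonneg_of_nonpos (by positivity) hF2
  have t5 : 0 ≤ (a * (1 - a)) * (h1 * v2 ^ 2 + h2 * v1 ^ 2 - 2 * c * v1 * v2) :=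
    mul_nonneg (by positivity) (by linarith)
  have hmul : ((a * F1 + (1 - a) * F2) * (a * v1 + (1 - a) * v2) +
      (α + 2 * β * (a * θ1 + (1 - a) * θ2) + γ * (a * θ1 + (1 - a) * θ2) ^ 2)) * (v1 * v2)
      ≤ 0 := by
    have hid : ((a * F1 + (1 - a) * F2) * (a * v1 + (1 - a) * v2) +
        (α + 2 * β * (a * θ1 + (1 - a) * θ2) + γ * (a * θ1 + (1 - a) * θ2) ^ 2)) * (v1 * v2)
        = (a * a * (v1 * v2)) * (F1 * v1 + h1) + (a * (1 - a) * (v2 * v2)) * (F1 * v1 + h1)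
          + ((1 - a) * (1 - a) * (v1 * v2)) * (F2 * v2 + h2)
          + (a * (1 - a) * (v1 * v1)) * (F2 * v2 + h2)
          - (a * (1 - a)) * (h1 * v2 ^ 2 + h2 * v1 ^ 2 - 2 * c * v1 * v2) := by
      simp only [hh1def, hh2def, hcdef]; ring
    rw [hid]
    linarith
  by_contra hcon
  push_neg at hcon
  nlinarith [mul_pos hcon hv12]
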